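/- Let q be an odd prime power, L_1 the set of lines of PG(3,q) skew to the line (I_2|0), and H_1 the set of hyperbolic quadrics containing (I_2|0) (each identified with its set of lines in L_1). Then (L_1, H_1) is a generalized partial geometry PG(q-1, q(q^2-1)-1; q-2, q-1, q): each block has q points, each point is on q(q^2-1) blocks, two points lie on at most one common block, and every anti-flag (L, H) has exactly q-2, q-1, or q points of H joined to L, with all three values attained. -/

import Mathlib

open Matrix

/-- Two points are joined if they are distinct and lie on a common block. -/
abbrev joinedIn {V : Type} [DecidableEq V] (Bl : Finset (Finset V)) (P Q : V) : Prop :=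
  P ≠ Q ∧ ∃ b ∈ Bl, P ∈ b ∧ Q ∈ b

set_option linter.unusedSectionVars false

namespace GPGaux

variable {F : Type} [Field F] [Fintype F] [DecidableEq F]

/-- the standard antisymmetric matrix -/
def Jm (F : Type) [Field F] : Matrix (Fin 2) (Fin 2) F := !![0, 1; -1, 0]

lemma Jm_det : (Jm F).det = 1 := by
  simp [Jm, Matrix.det_fin_two_of]

lemma Jm_transpose : (Jm F)ᵀ = - Jm F := by
  ext i j
  fin_cases i <;> fin_cases j <;> simp [Jm]

lemma antisymm_iff (h2 : (2 : F) ≠ 0) (M : Matrix (Fin 2) (Fin 2) F) :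
    Mᵀ + M = 0 ↔ ∃ μ : F, M = μ • Jm F := by
  constructor
  · intro h
    have h' : ∀ i j, M j i + M i j = 0 := by
      intro i j
      have := congrFun (congrFun h i) j
      simpa using this
    have hd : ∀ a : F, a + a = 0 → a = 0 := by
      intro a ha
      have : (2 : F) * a = 0 := by rw [two_mul]; exact ha
      rcases mul_eq_zero.mp this with h | h
      · exact absurd h h2
      · exact h
    refine ⟨M 0 1, ?_⟩
    ext i j
    fin_cases i <;> fin_cases j <;> simp [Jm]
    · exact hd _ (h' 0 0)
    · linear_combination h' 0 1
    · exact hd _ (h' 1 1)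
  · rintro ⟨μ, rfl⟩
    rw [Matrix.transpose_smul, Jm_transpose]
    simp


/-- the block set -/
def blocks (F : Type) [Field F] [Fintype F] [DecidableEq F] :
    Finset (Finset (Matrix (Fin 2) (Fin 2) F)) :=
  (Finset.univ.filter (fun BC : Matrix (Fin 2) (Fin 2) F × Matrix (Fin 2) (Fin 2) F =>
      IsUnit BC.1.det ∧ BC.2.IsSymm)).image
    (fun BC => Finset.univ.filter
      (fun N : Matrix (Fin 2) (Fin 2) F => BC.1ᵀ * Nᵀ + N * BC.1 + BC.2 = 0))

lemma mem_blocks {b : Finset (Matrix (Fin 2) (Fin 2) F)} :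
    b ∈ blocks F ↔ ∃ B C : Matrix (Fin 2) (Fin 2) F, IsUnit B.det ∧ C.IsSymm ∧
      b = Finset.univ.filter (fun N => Bᵀ * Nᵀ + N * B + C = 0) := by
  simp only [blocks, Finset.mem_image, Finset.mem_filter, Finset.mem_univ, true_and,
    Prod.exists]
  constructor
  · rintro ⟨B, C, ⟨hB, hC⟩, rfl⟩
    exact ⟨B, C, hB, hC, rfl⟩
  · rintro ⟨B, C, hB, hC, rfl⟩
    exact ⟨B, C, ⟨hB, hC⟩, rfl⟩

lemma mem_block_iff (h2 : (2 : F) ≠ 0) {B C N N' : Matrix (Fin 2) (Fin 2) F}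
    (hB : IsUnit B.det) (hN : Bᵀ * Nᵀ + N * B + C = 0) :
    Bᵀ * N'ᵀ + N' * B + C = 0 ↔ ∃ μ : F, N' = N + μ • (Jm F * B⁻¹) := by
  have key : Bᵀ * N'ᵀ + N' * B + C
      = ((N' - N) * B)ᵀ + (N' - N) * B + (Bᵀ * Nᵀ + N * B + C) := by
    rw [Matrix.transpose_mul, Matrix.transpose_sub]
    noncomm_ring
  rw [key, hN, add_zero, antisymm_iff h2]
  constructor
  · rintro ⟨μ, hμ⟩
    refine ⟨μ, ?_⟩
    have : N' - N = μ • (Jm F * B⁻¹) := by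
      have := congrArg (· * B⁻¹) hμ
      simpa [Matrix.mul_assoc, Matrix.mul_nonsing_inv B hB, Matrix.smul_mul] using this
    linear_combination (norm := abel) this
  · rintro ⟨μ, rfl⟩
    refine ⟨μ, ?_⟩
    have : N + μ • (Jm F * B⁻¹) - N = μ • (Jm F * B⁻¹) := by abel
    rw [this, Matrix.smul_mul, Matrix.mul_assoc, Matrix.nonsing_inv_mul B hB, Matrix.mul_one]

lemma block_as_line (h2 : (2 : F) ≠ 0) {b : Finset (Matrix (Fin 2) (Fin 2) F)}
    (hb : b ∈ blocks F) {P : Matrix (Fin 2) (Fin 2) F} (hP : P ∈ b) :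
    ∃ D : Matrix (Fin 2) (Fin 2) F, IsUnit D.det ∧
      b = Finset.univ.image (fun μ : F => P + μ • D) := by
  obtain ⟨B, C, hB, hC, rfl⟩ := mem_blocks.mp hb
  have hPeq : Bᵀ * Pᵀ + P * B + C = 0 := (Finset.mem_filter.mp hP).2
  refine ⟨Jm F * B⁻¹, ?_, ?_⟩
  · rw [Matrix.det_mul, Jm_det, one_mul, Matrix.isUnit_nonsing_inv_det_iff]
    exact hB
  · ext N'
    simp only [Finset.mem_filter, Finset.mem_univ, true_and, Finset.mem_image,
      mem_block_iff h2 hB hPeq]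
    constructor
    · rintro ⟨μ, rfl⟩; exact ⟨μ, rfl⟩
    · rintro ⟨μ, rfl⟩; exact ⟨μ, rfl⟩

lemma line_card {D : Matrix (Fin 2) (Fin 2) F} (hD : D ≠ 0) (P : Matrix (Fin 2) (Fin 2) F) :
    (Finset.univ.image (fun μ : F => P + μ • D)).card = Fintype.card F := by
  rw [Finset.card_image_of_injective _ ?_, Finset.card_univ]
  intro μ μ' h
  simp only [add_right_inj] at h
  have : (μ - μ') • D = 0 := by rw [sub_smul, h]; abel
  rcases smul_eq_zero.mp this with h' | h'
  · exact sub_eq_zero.mp h'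
  · exact absurd h' hD

lemma line_smul {c : F} (hc : c ≠ 0) (P D : Matrix (Fin 2) (Fin 2) F) :
    Finset.univ.image (fun μ : F => P + μ • (c • D))
      = Finset.univ.image (fun μ : F => P + μ • D) := by
  ext Q
  simp only [Finset.mem_image, Finset.mem_univ, true_and]
  constructor
  · rintro ⟨μ, rfl⟩; exact ⟨μ * c, by rw [mul_smul]⟩
  · rintro ⟨μ, rfl⟩; exact ⟨μ * c⁻¹, by rw [smul_smul, mul_assoc, inv_mul_cancel₀ hc, mul_one]⟩

lemma block_card (h2 : (2 : F) ≠ 0) {b : Finset (Matrix (Fin 2) (Fin 2) F)}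
    (hb : b ∈ blocks F) : b.card = Fintype.card F := by
  obtain ⟨B, C, hB, hC, rfl⟩ := mem_blocks.mp hb
  have hPeq : Bᵀ * ((-(2⁻¹ : F) • C) * B⁻¹)ᵀ + ((-(2⁻¹ : F) • C) * B⁻¹) * B + C = 0 := by
    have h1 : ((-(2⁻¹ : F) • C) * B⁻¹) * B = -(2⁻¹ : F) • C := by
      rw [Matrix.mul_assoc, Matrix.nonsing_inv_mul B hB, Matrix.mul_one]
    have h2' : Bᵀ * ((-(2⁻¹ : F) • C) * B⁻¹)ᵀ = -(2⁻¹ : F) • C := by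
      rw [← Matrix.transpose_mul, h1, Matrix.transpose_smul, hC.eq]
    rw [h1, h2']
    rw [← add_smul]
    have : -(2⁻¹ : F) + -(2⁻¹ : F) = -1 := by
      field_simp
      norm_num
    rw [this]
    simp
  have hP : ((-(2⁻¹ : F) • C) * B⁻¹) ∈ Finset.univ.filter
      (fun N : Matrix (Fin 2) (Fin 2) F => Bᵀ * Nᵀ + N * B + C = 0) := by
    simp only [Finset.mem_filter, Finset.mem_univ, true_and]
    exact hPeq
  obtain ⟨D, hD, hline⟩ := block_as_line h2 (mem_blocks.mpr ⟨B, C, hB, hC, rfl⟩) hP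
  rw [hline]
  apply line_card
  intro h0
  rw [h0] at hD
  simp at hD


lemma joined_iff (h2 : (2 : F) ≠ 0) (P Q : Matrix (Fin 2) (Fin 2) F) :
    joinedIn (blocks F) P Q ↔ IsUnit (Q - P).det := by
  constructor
  · rintro ⟨hne, b, hb, hPb, hQb⟩
    obtain ⟨D, hD, hline⟩ := block_as_line h2 hb hPb
    rw [hline, Finset.mem_image] at hQb
    obtain ⟨μ, -, rfl⟩ := hQb
    have hμ : μ ≠ 0 := by
      rintro rfl
      simp at hne
    have : P + μ • D - P = μ • D := by abel
    rw [this, Matrix.det_smul]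
    exact (isUnit_iff_ne_zero).mpr
      (mul_ne_zero (pow_ne_zero _ hμ) (isUnit_iff_ne_zero.mp hD))
  · intro h
    have hne : P ≠ Q := by
      rintro rfl
      simp at h
    set D := Q - P with hDdef
    have hD : IsUnit D.det := h
    have hDu : IsUnit D := (Matrix.isUnit_iff_isUnit_det D).mpr hD
    set B := D⁻¹ * Jm F with hBdef
    have hBdet : IsUnit B.det := by
      rw [hBdef, Matrix.det_mul, Jm_det, mul_one, Matrix.isUnit_nonsing_inv_det_iff]
      exact hD
    have hJB : Jm F * B⁻¹ = D := by
      rw [hBdef, Matrix.mul_inv_rev, Matrix.nonsing_inv_nonsing_inv D hD,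
        ← Matrix.mul_assoc, Matrix.mul_nonsing_inv (Jm F) (by rw [Jm_det]; exact isUnit_one),
        Matrix.one_mul]
    set C := -((P * B)ᵀ + P * B) with hCdef
    have hC : C.IsSymm := by
      rw [Matrix.IsSymm, hCdef]
      rw [Matrix.transpose_neg, Matrix.transpose_add, Matrix.transpose_transpose, add_comm]
    have hPeq : Bᵀ * Pᵀ + P * B + C = 0 := by
      rw [hCdef, ← Matrix.transpose_mul]
      abel_nf
    refine ⟨hne, Finset.univ.filter (fun N => Bᵀ * Nᵀ + N * B + C = 0),
      mem_blocks.mpr ⟨B, C, hBdet, hC, rfl⟩, ?_, ?_⟩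
    · simp only [Finset.mem_filter, Finset.mem_univ, true_and]
      exact hPeq
    · simp only [Finset.mem_filter, Finset.mem_univ, true_and]
      rw [mem_block_iff h2 hBdet hPeq]
      refine ⟨1, ?_⟩
      rw [hJB, one_smul, hDdef]
      abel

lemma blocks_pair (h2 : (2 : F) ≠ 0) {P Q : Matrix (Fin 2) (Fin 2) F} (hne : P ≠ Q) :
    ((blocks F).filter fun b => P ∈ b ∧ Q ∈ b).card ≤ 1 := by
  rw [Finset.card_le_one]
  intro b hb b' hb'
  rw [Finset.mem_filter] at hb hb'
  obtain ⟨hbB, hPb, hQb⟩ := hb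
  obtain ⟨hbB', hPb', hQb'⟩ := hb'
  obtain ⟨D, hD, hline⟩ := block_as_line h2 hbB hPb
  obtain ⟨D', hD', hline'⟩ := block_as_line h2 hbB' hPb'
  rw [hline, Finset.mem_image] at hQb
  rw [hline', Finset.mem_image] at hQb'
  obtain ⟨μ, -, hμ⟩ := hQb
  obtain ⟨μ', -, hμ'⟩ := hQb'
  have hμ0 : μ ≠ 0 := by rintro rfl; simp at hμ; exact hne hμ
  have hμ0' : μ' ≠ 0 := by rintro rfl; simp at hμ'; exact hne hμ'
  have e : μ • D = μ' • D' := by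
    have := hμ.trans hμ'.symm
    simpa using this
  have hDD : D' = (μ'⁻¹ * μ) • D := by
    calc D' = (μ'⁻¹ * μ') • D' := by rw [inv_mul_cancel₀ hμ0', one_smul]
    _ = μ'⁻¹ • (μ' • D') := mul_smul _ _ _
    _ = μ'⁻¹ • (μ • D) := by rw [e]
    _ = (μ'⁻¹ * μ) • D := (mul_smul _ _ _).symm
  rw [hline, hline', hDD, line_smul (mul_ne_zero (inv_ne_zero hμ0') hμ0)]


lemma card_unit_det :
    (Finset.univ.filter fun A : Matrix (Fin 2) (Fin 2) F => IsUnit A.det).card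
      = (Fintype.card F ^ 2 - 1) * (Fintype.card F ^ 2 - Fintype.card F) := by
  have h1 : (Finset.univ.filter fun A : Matrix (Fin 2) (Fin 2) F => IsUnit A.det)
      = Finset.univ.image (fun u : (Matrix (Fin 2) (Fin 2) F)ˣ => (u : Matrix (Fin 2) (Fin 2) F)) := by
    ext A
    simp only [Finset.mem_filter, Finset.mem_univ, true_and, Finset.mem_image]
    rw [← Matrix.isUnit_iff_isUnit_det]
    constructor
    · rintro ⟨u, rfl⟩; exact ⟨u, rfl⟩
    · rintro ⟨u, rfl⟩; exact ⟨u, rfl⟩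
  rw [h1, Finset.card_image_of_injective _ Units.val_injective, Finset.card_univ]
  have h2 : Fintype.card (Matrix (Fin 2) (Fin 2) F)ˣ = Nat.card (GL (Fin 2) F) := by
    rw [Nat.card_eq_fintype_card]
  rw [h2, Matrix.card_GL_field]
  rw [Fin.prod_univ_two]
  norm_num

lemma degree_count (h2 : (2 : F) ≠ 0) (N : Matrix (Fin 2) (Fin 2) F) :
    ((blocks F).filter fun b => N ∈ b).card * (Fintype.card F - 1)
      = (Fintype.card F ^ 2 - 1) * (Fintype.card F ^ 2 - Fintype.card F) := by
  have key : ((blocks F).filter fun b => N ∈ b).biUnion (fun b => b.erase N)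
      = Finset.univ.filter fun Q => IsUnit (Q - N).det := by
    ext Q
    simp only [Finset.mem_biUnion, Finset.mem_filter, Finset.mem_univ, true_and,
      Finset.mem_erase]
    rw [← joined_iff h2 N Q]
    constructor
    · rintro ⟨b, ⟨hb, hNb⟩, hQN, hQb⟩
      exact ⟨Ne.symm hQN, b, hb, hNb, hQb⟩
    · rintro ⟨hne, b, hb, hNb, hQb⟩
      exact ⟨b, ⟨hb, hNb⟩, Ne.symm hne, hQb⟩
  have hdisj : ∀ b₁ ∈ (blocks F).filter fun b => N ∈ b, ∀ b₂ ∈ (blocks F).filter fun b => N ∈ b,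
      b₁ ≠ b₂ → Disjoint (b₁.erase N) (b₂.erase N) := by
    intro b₁ hb₁ b₂ hb₂ hne
    rw [Finset.mem_filter] at hb₁ hb₂
    rw [Finset.disjoint_left]
    intro Q hQ1 hQ2
    rw [Finset.mem_erase] at hQ1 hQ2
    have hNQ : N ≠ Q := Ne.symm hQ1.1
    have hcard := blocks_pair h2 hNQ
    have hin1 : b₁ ∈ (blocks F).filter fun b => N ∈ b ∧ Q ∈ b :=
      Finset.mem_filter.mpr ⟨hb₁.1, hb₁.2, hQ1.2⟩
    have hin2 : b₂ ∈ (blocks F).filter fun b => N ∈ b ∧ Q ∈ b :=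
      Finset.mem_filter.mpr ⟨hb₂.1, hb₂.2, hQ2.2⟩
    have : 1 < ((blocks F).filter fun b => N ∈ b ∧ Q ∈ b).card :=
      Finset.one_lt_card.mpr ⟨b₁, hin1, b₂, hin2, hne⟩
    omega
  have hsum := Finset.card_biUnion hdisj
  rw [key] at hsum
  have hval : ∀ b ∈ (blocks F).filter fun b => N ∈ b, (b.erase N).card = Fintype.card F - 1 := by
    intro b hb
    rw [Finset.mem_filter] at hb
    rw [Finset.card_erase_of_mem hb.2, block_card h2 hb.1]
  rw [Finset.sum_congr rfl hval, Finset.sum_const, smul_eq_mul] at hsum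
  rw [← hsum, ← card_unit_det (F := F)]
  apply Finset.card_nbij' (fun Q => Q - N) (fun A => A + N)
  · intro a ha
    simpa using (Finset.mem_filter.mp ha).2
  · intro a ha
    simp only [Finset.mem_filter, Finset.mem_univ, true_and]
    simpa using (Finset.mem_filter.mp ha).2
  · intro a _; simp
  · intro a _; simp


open Polynomial in
lemma root_count_le (A D : Matrix (Fin 2) (Fin 2) F) (hD : D.det ≠ 0) :
    (Finset.univ.filter fun μ : F => (A + μ • D).det = 0).card ≤ 2 := by
  set m : F := A 0 0 * D 1 1 + A 1 1 * D 0 0 - A 0 1 * D 1 0 - A 1 0 * D 0 1 with hm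
  have hdet : ∀ μ : F, (A + μ • D).det = D.det * μ ^ 2 + m * μ + A.det := by
    intro μ
    simp [Matrix.det_fin_two, hm]
    ring
  set p : F[X] := C D.det * X ^ 2 + C m * X + C A.det with hp
  have hpne : p ≠ 0 := by
    intro h0
    have : p.coeff 2 = D.det := by
      simp [hp, coeff_add, coeff_C_mul, coeff_X, coeff_C]
    rw [h0] at this
    simp at this
    exact hD this.symm
  have hsub : (Finset.univ.filter fun μ : F => (A + μ • D).det = 0) ⊆ p.roots.toFinset := by
    intro μ hμ
    rw [Finset.mem_filter] at hμ
    rw [Multiset.mem_toFinset, Polynomial.mem_roots hpne]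
    rw [Polynomial.IsRoot, hp]
    simp only [Polynomial.eval_add, Polynomial.eval_mul, Polynomial.eval_C,
      Polynomial.eval_pow, Polynomial.eval_X]
    rw [← hdet μ]
    exact hμ.2
  calc (Finset.univ.filter fun μ : F => (A + μ • D).det = 0).card
      ≤ p.roots.toFinset.card := Finset.card_le_card hsub
    _ ≤ Multiset.card p.roots := Multiset.toFinset_card_le _
    _ ≤ p.natDegree := Polynomial.card_roots' p
    _ ≤ 2 := Polynomial.natDegree_quadratic_le

lemma count_line (h2 : (2 : F) ≠ 0) (P N₀ D : Matrix (Fin 2) (Fin 2) F) (hD0 : D ≠ 0) :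
    ((Finset.univ.image (fun μ : F => N₀ + μ • D)).filter
        fun Q => joinedIn (blocks F) P Q).card
      = Fintype.card F
        - (Finset.univ.filter fun μ : F => (N₀ - P + μ • D).det = 0).card := by
  classical
  rw [Finset.filter_image]
  · have hinj : Function.Injective (fun μ : F => N₀ + μ • D) := by
      intro μ μ' h
      simp only [add_right_inj] at h
      have : (μ - μ') • D = 0 := by rw [sub_smul, h]; abel
      rcases smul_eq_zero.mp this with h' | h'
      · exact sub_eq_zero.mp h'
      · exact absurd h' hD0
    rw [Finset.card_image_of_injective _ hinj]
    have hfe : (Finset.univ.filter fun μ : F => joinedIn (blocks F) P (N₀ + μ • D))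
        = Finset.univ.filter fun μ : F => ¬ (N₀ - P + μ • D).det = 0 := by
      apply Finset.filter_congr
      intro μ _
      rw [joined_iff h2]
      have : N₀ + μ • D - P = N₀ - P + μ • D := by abel
      rw [this, isUnit_iff_ne_zero]
    rw [hfe]
    have := Finset.card_filter_add_card_filter_not
      (s := (Finset.univ : Finset F)) (p := fun μ : F => (N₀ - P + μ • D).det = 0)
    rw [Finset.card_univ] at this
    omega


lemma antiflag_mem (h2 : (2 : F) ≠ 0) (P : Matrix (Fin 2) (Fin 2) F)
    {b : Finset (Matrix (Fin 2) (Fin 2) F)} (hb : b ∈ blocks F) :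
    (b.filter fun Q => joinedIn (blocks F) P Q).card
      ∈ ({Fintype.card F - 2, Fintype.card F - 1, Fintype.card F} : Finset ℕ) := by
  have hbne : b.Nonempty := by
    rw [← Finset.card_pos, block_card h2 hb]
    exact Fintype.card_pos
  obtain ⟨N₀, hN₀⟩ := hbne
  obtain ⟨D, hD, hline⟩ := block_as_line h2 hb hN₀
  have hD0 : D ≠ 0 := by
    intro h0; rw [h0] at hD; simp at hD
  rw [hline, count_line h2 P N₀ D hD0]
  have hr := root_count_le (N₀ - P) D (isUnit_iff_ne_zero.mp hD)
  simp only [Finset.mem_insert, Finset.mem_singleton]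
  omega

/-- the standard block through `0` with direction `1` -/
lemma std_block (h2 : (2 : F) ≠ 0) :
    (Finset.univ.filter fun N : Matrix (Fin 2) (Fin 2) F =>
        (Jm F)ᵀ * Nᵀ + N * Jm F + 0 = 0) ∈ blocks F ∧
    (Finset.univ.filter fun N : Matrix (Fin 2) (Fin 2) F =>
        (Jm F)ᵀ * Nᵀ + N * Jm F + 0 = 0)
      = Finset.univ.image (fun μ : F => (0 : Matrix (Fin 2) (Fin 2) F)
          + μ • (1 : Matrix (Fin 2) (Fin 2) F)) := by
  have hJdet : IsUnit (Jm F).det := by rw [Jm_det]; exact isUnit_one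
  have h0eq : (Jm F)ᵀ * (0 : Matrix (Fin 2) (Fin 2) F)ᵀ + 0 * Jm F + 0 = 0 := by simp
  constructor
  · exact mem_blocks.mpr ⟨Jm F, 0, hJdet, Matrix.isSymm_zero, rfl⟩
  · ext N
    simp only [Finset.mem_filter, Finset.mem_univ, true_and, Finset.mem_image]
    rw [mem_block_iff h2 hJdet h0eq,
      Matrix.mul_nonsing_inv (Jm F) hJdet]
    constructor
    · rintro ⟨μ, rfl⟩; exact ⟨μ, rfl⟩
    · rintro ⟨μ, rfl⟩; exact ⟨μ, rfl⟩

lemma example_case (h2 : (2 : F) ≠ 0) (A : Matrix (Fin 2) (Fin 2) F) (hA : A 1 0 = 1) :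
    ∃ P : Matrix (Fin 2) (Fin 2) F, ∃ b ∈ blocks F, P ∉ b ∧
      (b.filter fun Q => joinedIn (blocks F) P Q).card
        = Fintype.card F
          - (Finset.univ.filter fun μ : F => (A + μ • 1).det = 0).card := by
  obtain ⟨hbmem, hbline⟩ := std_block (F := F) h2
  refine ⟨-A, _, hbmem, ?_, ?_⟩
  · rw [hbline, Finset.mem_image]
    rintro ⟨μ, -, hμ⟩
    have := congrFun (congrFun hμ 1) 0
    simp [Matrix.one_apply, hA] at this
  · rw [hbline, count_line h2 (-A) 0 1 one_ne_zero]
    have hset : (Finset.univ.filter fun μ : F =>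
          ((0 : Matrix (Fin 2) (Fin 2) F) - -A + μ • 1).det = 0)
        = Finset.univ.filter fun μ : F => (A + μ • 1).det = 0 := by
      apply Finset.filter_congr
      intro μ _
      have : (0 : Matrix (Fin 2) (Fin 2) F) - -A + μ • 1 = A + μ • 1 := by abel
      rw [this]
    rw [hset]


lemma card_case2 :
    (Finset.univ.filter fun μ : F =>
      ((!![0,0;1,1] : Matrix (Fin 2) (Fin 2) F) + μ • 1).det = 0).card = 2 := by
  have hne : (0 : F) ≠ -1 := by
    intro h
    have h1 : (1 : F) = 0 := by linear_combination h
    exact one_ne_zero h1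
  have hset : (Finset.univ.filter fun μ : F =>
      ((!![0,0;1,1] : Matrix (Fin 2) (Fin 2) F) + μ • 1).det = 0) = {0, -1} := by
    ext μ
    simp only [Finset.mem_filter, Finset.mem_univ, true_and, Finset.mem_insert,
      Finset.mem_singleton, Matrix.det_fin_two, Matrix.add_apply, Matrix.smul_apply,
      Matrix.one_apply, smul_eq_mul]
    norm_num
    constructor
    · rintro (h | h)
      · exact Or.inl h
      · exact Or.inr (by linear_combination h)
    · rintro (h | h)
      · exact Or.inl h
      · exact Or.inr (by linear_combination h)
  rw [hset, Finset.card_pair hne]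

lemma card_case1 :
    (Finset.univ.filter fun μ : F =>
      ((!![0,0;1,0] : Matrix (Fin 2) (Fin 2) F) + μ • 1).det = 0).card = 1 := by
  have hset : (Finset.univ.filter fun μ : F =>
      ((!![0,0;1,0] : Matrix (Fin 2) (Fin 2) F) + μ • 1).det = 0) = {0} := by
    ext μ
    simp only [Finset.mem_filter, Finset.mem_univ, true_and, Finset.mem_singleton,
      Matrix.det_fin_two, Matrix.add_apply, Matrix.smul_apply, Matrix.one_apply,
      smul_eq_mul]
    norm_num
  rw [hset, Finset.card_singleton]

lemma card_case0 {c : F} (hc : ¬ IsSquare c) :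
    (Finset.univ.filter fun μ : F =>
      ((!![0,c;1,0] : Matrix (Fin 2) (Fin 2) F) + μ • 1).det = 0).card = 0 := by
  rw [Finset.card_eq_zero]
  rw [Finset.filter_eq_empty_iff]
  intro μ _
  simp only [Matrix.det_fin_two, Matrix.add_apply, Matrix.smul_apply, Matrix.one_apply,
    smul_eq_mul]
  norm_num
  intro h
  exact hc ⟨μ, by linear_combination -h⟩


end GPGaux

/-- (𝒫, ℬ) is a generalized partial geometry PG(s,t;α₁,…,α_r) with {α₁,…,α_r} = αs. -/
def IsGPG {V : Type} [Fintype V] [DecidableEq V] (Bl : Finset (Finset V))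
    (s t : ℕ) (αs : Finset ℕ) : Prop :=
  (∀ P Q : V, P ≠ Q → (Bl.filter fun b => P ∈ b ∧ Q ∈ b).card ≤ 1) ∧
  (∀ b ∈ Bl, b.card = s + 1) ∧
  (∀ P : V, (Bl.filter fun b => P ∈ b).card = t + 1) ∧
  (∀ (P : V), ∀ b ∈ Bl, P ∉ b → (b.filter fun Q => joinedIn Bl P Q).card ∈ αs) ∧
  (∀ α ∈ αs, ∃ (P : V), ∃ b ∈ Bl, P ∉ b ∧ (b.filter fun Q => joinedIn Bl P Q).card = α)

/-- The incidence structure of lines (N|I₂) skew to (I₂|0) versus hyperbolic quadrics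
[[0,B],[Bᵀ,C]] through (I₂|0) — where (N|I₂) lies in the quadric iff BᵀNᵀ+NB+C = 0 —
is a generalized partial geometry PG(q-1, q(q²-1)-1; q-2, q-1, q). -/
theorem stmt_13 (F : Type) [Field F] [Fintype F] [DecidableEq F] (q : ℕ)
    (hq : Fintype.card F = q) (hodd : Odd q) :
    IsGPG (V := Matrix (Fin 2) (Fin 2) F)
      ((Finset.univ.filter (fun BC : Matrix (Fin 2) (Fin 2) F × Matrix (Fin 2) (Fin 2) F =>
          IsUnit BC.1.det ∧ BC.2.IsSymm)).image
        (fun BC => Finset.univ.filter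
          (fun N : Matrix (Fin 2) (Fin 2) F => BC.1ᵀ * Nᵀ + N * BC.1 + BC.2 = 0)))
      (q - 1) (q * (q ^ 2 - 1) - 1) {q - 2, q - 1, q} := by
  have hchar : ringChar F ≠ 2 := by
    intro h
    have hev := FiniteField.even_card_of_char_two h
    rw [hq] at hev
    have hodd2 := Nat.odd_iff.mp hodd
    omega
  have h2 : (2 : F) ≠ 0 := Ring.two_ne_zero hchar
  subst hq
  have hq2 : 1 < Fintype.card F := Fintype.one_lt_card
  have hq3 : 3 ≤ Fintype.card F := by
    have := Nat.odd_iff.mp hodd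
    omega
  show IsGPG (GPGaux.blocks F) _ _ _
  refine ⟨?_, ?_, ?_, ?_, ?_⟩
  · intro P Q hne
    exact GPGaux.blocks_pair h2 hne
  · intro b hb
    rw [GPGaux.block_card h2 hb]
    omega
  · intro P
    have h := GPGaux.degree_count h2 P
    have b1 : 1 ≤ Fintype.card F ^ 2 := by nlinarith
    have b2 : Fintype.card F ≤ Fintype.card F ^ 2 := by nlinarith
    have b3 : 1 ≤ Fintype.card F := by omega
    have key : (Fintype.card F ^ 2 - 1) * (Fintype.card F ^ 2 - Fintype.card F)
        = (Fintype.card F * (Fintype.card F ^ 2 - 1)) * (Fintype.card F - 1) := by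
      zify [b1, b2, b3]
      ring
    rw [key] at h
    have hcancel := Nat.eq_of_mul_eq_mul_right (by omega : 0 < Fintype.card F - 1) h
    have hge : 1 ≤ Fintype.card F * (Fintype.card F ^ 2 - 1) := Nat.mul_pos (by omega) (by omega)
    rw [Nat.sub_add_cancel hge]
    exact hcancel
  · intro P b hb _
    exact GPGaux.antiflag_mem h2 P hb
  · intro α hα
    simp only [Finset.mem_insert, Finset.mem_singleton] at hα
    rcases hα with rfl | rfl | rfl
    · obtain ⟨P, b, hb, hPb, hcount⟩ :=
        GPGaux.example_case h2 (!![0,0;1,1] : Matrix (Fin 2) (Fin 2) F) (by simp)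
      exact ⟨P, b, hb, hPb, by rw [hcount, GPGaux.card_case2]⟩
    · obtain ⟨P, b, hb, hPb, hcount⟩ :=
        GPGaux.example_case h2 (!![0,0;1,0] : Matrix (Fin 2) (Fin 2) F) (by simp)
      exact ⟨P, b, hb, hPb, by rw [hcount, GPGaux.card_case1]⟩
    · obtain ⟨c, hc⟩ := FiniteField.exists_nonsquare (F := F) hchar
      obtain ⟨P, b, hb, hPb, hcount⟩ :=
        GPGaux.example_case h2 (!![0,c;1,0] : Matrix (Fin 2) (Fin 2) F) (by simp)
      exact ⟨P, b, hb, hPb, by rw [hcount, GPGaux.card_case0 hc, Nat.sub_zero]⟩
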